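/- Let X be a Polish space and N ≥ k ≥ 2. A measure μ_k ∈ 𝒫(X^k) is N-representable if and only if there exists a Borel probability measure α on 𝒫(X) (with its narrow topology) with α(𝒫_{1/N}(X)) = 1 such that for every bounded continuous φ : X^k → ℝ one has ∫_{X^k} φ dμ_k = ∫_{𝒫_{1/N}(X)} ( ∫_{X^k} φ d(F_{N,k}(λ)) ) dα(λ). -/

import Mathlib

open MeasureTheory Filter Topology ENNReal

noncomputable section

namespace FiniteDeFinetti

variable {X : Type*}

/-- The symmetrization `S_N γ := (1/N!) ∑_{σ ∈ S_N} γ^σ` of a measure on `X^N`,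
where `γ^σ` is the pushforward of `γ` under the coordinate permutation induced by `σ`. -/
def symmetrize [MeasurableSpace X] (N : ℕ) (γ : Measure (Fin N → X)) :
    Measure (Fin N → X) :=
  (N.factorial : ℝ≥0∞)⁻¹ • ∑ σ : Equiv.Perm (Fin N), γ.map (fun x i => x (σ i))

/-- The `k`-point marginal `M_k γ` of a measure on `X^N` (projection on the first `k` coords). -/
def marginal [MeasurableSpace X] {k N : ℕ} (h : k ≤ N) (γ : Measure (Fin N → X)) :
    Measure (Fin k → X) :=
  γ.map (fun x i => x (Fin.castLE h i))

/-- `𝒫_sym(X^N)`: symmetric probability measures on `X^N`. -/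
def PsymSet [MeasurableSpace X] (N : ℕ) : Set (Measure (Fin N → X)) :=
  {γ | IsProbabilityMeasure γ ∧ γ = symmetrize N γ}

/-- `𝒫_{N-rep}(X^k)`: the `N`-representable `k`-plans. -/
def NRep [MeasurableSpace X] {k N : ℕ} (h : k ≤ N) : Set (Measure (Fin k → X)) :=
  {μ | ∃ γ : Measure (Fin N → X), γ ∈ PsymSet N ∧ μ = marginal h γ}

/-- Narrow (weak) convergence of a sequence of measures: convergence of integrals of all
bounded continuous functions. -/
def NarrowTendsto {Y : Type*} [MeasurableSpace Y] [TopologicalSpace Y]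
    (μs : ℕ → Measure Y) (μ : Measure Y) : Prop :=
  ∀ φ : BoundedContinuousFunction Y ℝ,
    Tendsto (fun n => ∫ y, φ y ∂(μs n)) atTop (𝓝 (∫ y, φ y ∂μ))

/-- The empirical measure `(1/N) ∑ δ_{x_i}`. -/
def empirical [MeasurableSpace X] (N : ℕ) (x : Fin N → X) : Measure X :=
  (N : ℝ≥0∞)⁻¹ • ∑ i, Measure.dirac (x i)

/-- Extreme point of a convex set of measures. -/
def IsExtremePt {Y : Type*} [MeasurableSpace Y] (C : Set (Measure Y)) (μ : Measure Y) : Prop :=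
  μ ∈ C ∧ ∀ μ1 ∈ C, ∀ μ2 ∈ C, ∀ t : ℝ≥0∞, 0 < t → t < 1 →
    μ = t • μ1 + (1 - t) • μ2 → μ1 = μ ∧ μ2 = μ

/-- The set `E_{N,k}` of marginals of symmetrized Dirac measures. -/
def ENk [MeasurableSpace X] {k N : ℕ} (h : k ≤ N) : Set (Measure (Fin k → X)) :=
  {μ | ∃ x : Fin N → X, μ = marginal h (symmetrize N (Measure.dirac x))}

/-- Borel σ-algebra on the space of probability measures with its narrow topology. -/
instance instMSPM {Y : Type*} [MeasurableSpace Y] [TopologicalSpace Y]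
    [OpensMeasurableSpace Y] : MeasurableSpace (ProbabilityMeasure Y) := borel _

lemma empirical_isProbabilityMeasure [MeasurableSpace X] {N : ℕ} (hN : 0 < N) (x : Fin N → X) :
    IsProbabilityMeasure (empirical N x) := by
  constructor
  simp only [empirical, Measure.smul_apply, smul_eq_mul]
  rw [Measure.finset_sum_apply]
  simp only [measure_univ, Finset.sum_const, Finset.card_univ, Fintype.card_fin, nsmul_eq_mul,
    mul_one]
  exact ENNReal.inv_mul_cancel (by exact_mod_cast hN.ne') (natCast_ne_top N)

/-- The empirical-measure map `Λ : X^N → 𝒫(X)`. -/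
def empPM [MeasurableSpace X] {N : ℕ} (hN : 0 < N) (x : Fin N → X) : ProbabilityMeasure X :=
  ⟨empirical N x, empirical_isProbabilityMeasure hN x⟩

/-- The set `𝒫_{1/N}(X)` of `1/N`-quantized probability measures (as probability measures). -/
def QuantizedPM [MeasurableSpace X] (N : ℕ) : Set (ProbabilityMeasure X) :=
  {lam | ∃ x : Fin N → X, (lam : Measure X) = empirical N x}

open Classical in
/-- The extremal `N`-representable `k`-plan `F_{N,k}(λ)` associated with a `1/N`-quantized
probability measure `λ = (1/N) ∑ δ_{x_i}`, namely `M_k S_N δ_{(x_1,…,x_N)}` (this does not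
depend on the chosen enumeration of the atoms of `λ` counted with multiplicity); junk value
`λ^{⊗k}` for non-quantized `λ`. -/
def FNk [MeasurableSpace X] {k N : ℕ} (h : k ≤ N) (lam : ProbabilityMeasure X) :
    Measure (Fin k → X) :=
  if hx : ∃ x : Fin N → X, (lam : Measure X) = empirical N x then
    marginal h (symmetrize N (Measure.dirac (Classical.choose hx)))
  else Measure.pi fun _ => (lam : Measure X)


section Aux

-- ### permutation lemma
lemma exists_perm_of_ofFn_perm : ∀ {N : ℕ} {α : Type*} {x y : Fin N → α},
    (List.ofFn x).Perm (List.ofFn y) → ∃ σ : Equiv.Perm (Fin N), x = y ∘ σ := by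
  intro N
  induction N with
  | zero => exact fun _ => ⟨1, funext fun i => i.elim0⟩
  | succ n ih =>
    intro α x y h
    have hx0 : x 0 ∈ List.ofFn y := h.mem_iff.mp (by rw [List.mem_ofFn]; exact ⟨0, rfl⟩)
    rw [List.mem_ofFn] at hx0
    obtain ⟨j, hj⟩ := hx0
    have hperm : (List.ofFn (y ∘ Equiv.swap (0 : Fin (n+1)) j)).Perm (List.ofFn y) :=
      Equiv.Perm.ofFn_comp_perm _ y
    have h' : (List.ofFn x).Perm (List.ofFn (y ∘ Equiv.swap (0 : Fin (n+1)) j)) :=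
      h.trans hperm.symm
    rw [List.ofFn_succ, List.ofFn_succ] at h'
    have hy'0 : (y ∘ Equiv.swap (0 : Fin (n+1)) j) 0 = x 0 := by
      simp [Equiv.swap_apply_left, hj]
    rw [hy'0] at h'
    obtain ⟨σ', hσ'⟩ := ih h'.cons_inv
    refine ⟨(Equiv.Perm.decomposeFin.symm (0, σ')).trans (Equiv.swap (0 : Fin (n+1)) j), ?_⟩
    funext i
    induction i using Fin.cases with
    | zero =>
      show x 0 = y (((Equiv.Perm.decomposeFin.symm (0, σ')).trans
        (Equiv.swap (0 : Fin (n+1)) j)) 0)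
      rw [Equiv.trans_apply, Equiv.Perm.decomposeFin_symm_apply_zero, Equiv.swap_apply_left, hj]
    | succ i =>
      show x i.succ = y (((Equiv.Perm.decomposeFin.symm (0, σ')).trans
        (Equiv.swap (0 : Fin (n+1)) j)) i.succ)
      rw [Equiv.trans_apply, Equiv.Perm.decomposeFin_symm_apply_succ, Equiv.swap_self]
      have := congrFun hσ' i
      simpa using this

lemma count_ofFn {α : Type*} [DecidableEq α] {N : ℕ} (x : Fin N → α) (a : α) :
    (List.ofFn x).count a = (Finset.univ.filter fun i => x i = a).card := by
  classical
  have h1 : (List.ofFn x).count a = Multiset.count a (Multiset.map x (Finset.univ.val)) := by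
    rw [List.ofFn_eq_map, Fin.univ_def]
    simp [Multiset.map_coe]
  rw [h1, Multiset.count_map]
  have h2 : (Multiset.filter (fun i => a = x i) Finset.univ.val)
      = (Multiset.filter (fun i => x i = a) Finset.univ.val) :=
    Multiset.filter_congr (fun i _ => by constructor <;> exact Eq.symm)
  rw [h2]
  rfl

lemma exists_perm_of_empirical_eq [MeasurableSpace X] [MeasurableSingletonClass X]
    {N : ℕ} (hN : 0 < N) {x y : Fin N → X} (h : empirical N x = empirical N y) :
    ∃ σ : Equiv.Perm (Fin N), x = y ∘ σ := by
  classical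
  apply exists_perm_of_ofFn_perm
  rw [List.perm_iff_count]
  intro a
  have hcnt : ∀ z : Fin N → X, empirical N z {a}
      = (N : ℝ≥0∞)⁻¹ * ((Finset.univ.filter fun i => z i = a).card : ℝ≥0∞) := by
    intro z
    simp only [empirical, Measure.smul_apply, smul_eq_mul]
    rw [Measure.finset_sum_apply]
    congr 1
    have : ∀ i, Measure.dirac (z i) {a} = if z i = a then (1:ℝ≥0∞) else 0 := by
      intro i
      rw [Measure.dirac_apply' _ (measurableSet_singleton a)]
      simp [Set.indicator, Set.mem_singleton_iff]
    rw [Finset.sum_congr rfl fun i _ => this i, Finset.sum_boole]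
  have h2 := congrArg (fun μ : Measure X => μ {a}) h
  simp only [hcnt] at h2
  have h3 := congrArg (fun c => (N : ℝ≥0∞) * c) h2
  simp only [← mul_assoc, ENNReal.mul_inv_cancel (by exact_mod_cast hN.ne') (natCast_ne_top N),
    one_mul] at h3
  have h4 : ((Finset.univ.filter fun i => x i = a).card : ℝ≥0∞)
      = ((Finset.univ.filter fun i => y i = a).card : ℝ≥0∞) := h3
  rw [count_ofFn, count_ofFn]
  exact_mod_cast h4

end Aux


-- ### measure algebra

lemma measurable_permMap [MeasurableSpace X] {N : ℕ} (σ : Equiv.Perm (Fin N)) :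
    Measurable (fun x : Fin N → X => fun i => x (σ i)) :=
  measurable_pi_lambda _ fun _ => measurable_pi_apply _

lemma measurable_proj [MeasurableSpace X] {k N : ℕ} (h : k ≤ N) :
    Measurable (fun x : Fin N → X => fun i : Fin k => x (Fin.castLE h i)) :=
  measurable_pi_lambda _ fun _ => measurable_pi_apply _

lemma map_finset_sum {Ω Ω' : Type*} [MeasurableSpace Ω] [MeasurableSpace Ω'] {ι : Type*}
    (s : Finset ι) (μ : ι → Measure Ω) {f : Ω → Ω'} (hf : Measurable f) :
    (∑ i ∈ s, μ i).map f = ∑ i ∈ s, (μ i).map f := by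
  classical
  induction s using Finset.induction with
  | empty => simp
  | insert _ _ hnot ih =>
    rw [Finset.sum_insert hnot, Finset.sum_insert hnot, Measure.map_add _ _ hf, ih]

lemma symmetrize_isProbabilityMeasure [MeasurableSpace X] {N : ℕ} {γ : Measure (Fin N → X)}
    (hγ : IsProbabilityMeasure γ) : IsProbabilityMeasure (symmetrize N γ) := by
  constructor
  simp only [symmetrize, Measure.smul_apply, smul_eq_mul, Measure.finset_sum_apply]
  have h1 : ∀ σ : Equiv.Perm (Fin N),
      (γ.map fun x i => x (σ i)) Set.univ = 1 := fun σ => by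
    rw [Measure.map_apply (measurable_permMap σ) MeasurableSet.univ, Set.preimage_univ,
      measure_univ]
  rw [Finset.sum_congr rfl fun σ _ => h1 σ]
  simp only [Finset.sum_const, Finset.card_univ, Fintype.card_perm, Fintype.card_fin,
    nsmul_eq_mul, mul_one]
  exact ENNReal.inv_mul_cancel (by exact_mod_cast N.factorial_ne_zero) (natCast_ne_top _)

lemma map_permMap_permMap [MeasurableSpace X] {N : ℕ} (γ : Measure (Fin N → X))
    (σ τ : Equiv.Perm (Fin N)) :
    (γ.map fun x i => x (σ i)).map (fun x i => x (τ i)) = γ.map fun x i => x ((σ * τ) i) := by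
  rw [Measure.map_map (measurable_permMap τ) (measurable_permMap σ)]
  rfl

lemma symmetrize_map_permMap [MeasurableSpace X] {N : ℕ} (γ : Measure (Fin N → X))
    (τ : Equiv.Perm (Fin N)) :
    (symmetrize N γ).map (fun x i => x (τ i)) = symmetrize N γ := by
  simp only [symmetrize]
  rw [Measure.map_smul, map_finset_sum _ _ (measurable_permMap τ)]
  congr 1
  rw [Finset.sum_congr rfl fun σ _ => map_permMap_permMap γ σ τ]
  exact Equiv.sum_comp (Equiv.mulRight τ) (fun σ => γ.map fun x i => x (σ i))

lemma symmetrize_symmetrize [MeasurableSpace X] {N : ℕ} (γ : Measure (Fin N → X)) :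
    symmetrize N (symmetrize N γ) = symmetrize N γ := by
  conv_lhs => rw [symmetrize]
  rw [Finset.sum_congr rfl fun τ _ => symmetrize_map_permMap γ τ]
  simp only [Finset.sum_const, Finset.card_univ, Fintype.card_perm, Fintype.card_fin]
  rw [← Nat.cast_smul_eq_nsmul ℝ≥0∞, smul_smul,
    ENNReal.inv_mul_cancel (by exact_mod_cast N.factorial_ne_zero) (natCast_ne_top _), one_smul]

lemma empirical_comp_perm [MeasurableSpace X] {N : ℕ} (x : Fin N → X) (σ : Equiv.Perm (Fin N)) :
    empirical N (x ∘ σ) = empirical N x := by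
  unfold empirical
  congr 1
  exact Equiv.sum_comp σ (fun i => Measure.dirac (x i))

-- ### the function ψ̄

def psiBar [TopologicalSpace X] {k N : ℕ} (hkN : k ≤ N)
    (φ : BoundedContinuousFunction (Fin k → X) ℝ) (x : Fin N → X) : ℝ :=
  (N.factorial : ℝ)⁻¹ * ∑ σ : Equiv.Perm (Fin N), φ (fun i => x (σ (Fin.castLE hkN i)))

lemma psiBar_comp_perm [TopologicalSpace X] {k N : ℕ} (hkN : k ≤ N)
    (φ : BoundedContinuousFunction (Fin k → X) ℝ) (x : Fin N → X) (τ : Equiv.Perm (Fin N)) :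
    psiBar hkN φ (x ∘ τ) = psiBar hkN φ x := by
  unfold psiBar
  congr 1
  exact Equiv.sum_comp (Equiv.mulLeft τ) (fun σ => φ (fun i => x (σ (Fin.castLE hkN i))))

lemma continuous_psiBar [TopologicalSpace X] {k N : ℕ} (hkN : k ≤ N)
    (φ : BoundedContinuousFunction (Fin k → X) ℝ) : Continuous (psiBar (X := X) hkN φ) := by
  unfold psiBar
  exact continuous_const.mul (continuous_finset_sum _ fun σ _ =>
    φ.continuous.comp (continuous_pi fun i => continuous_apply _))

lemma abs_psiBar_le [TopologicalSpace X] {k N : ℕ} (hkN : k ≤ N)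
    (φ : BoundedContinuousFunction (Fin k → X) ℝ) (x : Fin N → X) :
    |psiBar hkN φ x| ≤ ‖φ‖ := by
  unfold psiBar
  rw [abs_mul, abs_inv, abs_of_nonneg (by positivity : (0:ℝ) ≤ (N.factorial : ℝ))]
  have h1 : |∑ σ : Equiv.Perm (Fin N), φ (fun i => x (σ (Fin.castLE hkN i)))|
      ≤ (N.factorial : ℝ) * ‖φ‖ := by
    calc |∑ σ : Equiv.Perm (Fin N), φ (fun i => x (σ (Fin.castLE hkN i)))|
        ≤ ∑ σ : Equiv.Perm (Fin N), |φ (fun i => x (σ (Fin.castLE hkN i)))| :=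
          Finset.abs_sum_le_sum_abs _ _
      _ ≤ ∑ _σ : Equiv.Perm (Fin N), ‖φ‖ :=
          Finset.sum_le_sum fun σ _ => φ.norm_coe_le_norm _
      _ = (N.factorial : ℝ) * ‖φ‖ := by
          simp [Finset.card_univ, Fintype.card_perm, mul_comm]
  calc (N.factorial : ℝ)⁻¹ * |∑ σ : Equiv.Perm (Fin N), φ (fun i => x (σ (Fin.castLE hkN i)))|
      ≤ (N.factorial : ℝ)⁻¹ * ((N.factorial : ℝ) * ‖φ‖) := by
        apply mul_le_mul_of_nonneg_left h1 (by positivity)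
    _ = ‖φ‖ := by
        rw [← mul_assoc, inv_mul_cancel₀ (by exact_mod_cast N.factorial_ne_zero), one_mul]

lemma integral_marginal_symmetrize [MeasurableSpace X] [TopologicalSpace X] [PolishSpace X]
    [BorelSpace X] {k N : ℕ} (hkN : k ≤ N) (γ : Measure (Fin N → X)) [IsProbabilityMeasure γ]
    (φ : BoundedContinuousFunction (Fin k → X) ℝ) :
    ∫ y, φ y ∂(marginal hkN (symmetrize N γ)) = ∫ x, psiBar hkN φ x ∂γ := by
  have hg : ∀ σ : Equiv.Perm (Fin N),
      Measurable (fun x : Fin N → X => fun i : Fin k => x (σ (Fin.castLE hkN i))) :=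
    fun σ => measurable_pi_lambda _ fun _ => measurable_pi_apply _
  have hmarg : marginal hkN (symmetrize N γ)
      = (N.factorial : ℝ≥0∞)⁻¹ • ∑ σ : Equiv.Perm (Fin N),
          γ.map (fun x i => x (σ (Fin.castLE hkN i))) := by
    rw [marginal, symmetrize, Measure.map_smul, map_finset_sum _ _ (measurable_proj hkN)]
    congr 1
    refine Finset.sum_congr rfl fun σ _ => ?_
    rw [Measure.map_map (measurable_proj hkN) (measurable_permMap σ)]
    rfl
  rw [hmarg]
  have hpm : ∀ σ : Equiv.Perm (Fin N),
      IsProbabilityMeasure (γ.map (fun x : Fin N → X => fun i : Fin k => x (σ (Fin.castLE hkN i)))) :=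
    fun σ => Measure.isProbabilityMeasure_map (hg σ).aemeasurable
  rw [integral_smul_measure, integral_finset_sum_measure (fun σ _ => by
    haveI := hpm σ
    exact φ.integrable _)]
  have hEach : ∀ σ : Equiv.Perm (Fin N),
      ∫ y, φ y ∂(γ.map (fun x : Fin N → X => fun i : Fin k => x (σ (Fin.castLE hkN i))))
        = ∫ x, φ (fun i => x (σ (Fin.castLE hkN i))) ∂γ := fun σ =>
    integral_map (hg σ).aemeasurable φ.continuous.aestronglyMeasurable
  rw [Finset.sum_congr rfl fun σ _ => hEach σ]
  have hint : ∀ σ : Equiv.Perm (Fin N),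
      Integrable (fun x : Fin N → X => φ (fun i => x (σ (Fin.castLE hkN i)))) γ := by
    intro σ
    have := (φ.compContinuous
      ⟨fun x : Fin N → X => fun i : Fin k => x (σ (Fin.castLE hkN i)),
        continuous_pi fun i => continuous_apply _⟩).integrable γ
    exact this
  rw [← integral_finset_sum _ (fun σ _ => hint σ)]
  unfold psiBar
  have hc : ((N.factorial : ℝ≥0∞)⁻¹).toReal = (N.factorial : ℝ)⁻¹ := by
    simp [ENNReal.toReal_inv]
  rw [smul_eq_mul, hc, ← integral_const_mul]

lemma integral_empirical [MeasurableSpace X] [TopologicalSpace X] [OpensMeasurableSpace X]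
    {N : ℕ} (x : Fin N → X) (f : BoundedContinuousFunction X ℝ) :
    ∫ y, f y ∂(empirical N x) = (N : ℝ)⁻¹ * ∑ i, f (x i) := by
  unfold empirical
  rw [integral_smul_measure, integral_finset_sum_measure (fun i _ => f.integrable _)]
  simp [integral_dirac' _ _ f.continuous.stronglyMeasurable, smul_eq_mul,
    ENNReal.toReal_inv]

lemma continuous_empPM [MeasurableSpace X] [TopologicalSpace X] [PolishSpace X] [BorelSpace X]
    {N : ℕ} (hN : 0 < N) : Continuous (empPM (X := X) hN) := by
  rw [continuous_iff_continuousAt]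
  intro x
  unfold ContinuousAt
  rw [ProbabilityMeasure.tendsto_iff_forall_integral_tendsto]
  intro f
  have key : ∀ y : Fin N → X, ∫ ω, f ω ∂((empPM hN y : Measure X)) = (N:ℝ)⁻¹ * ∑ i, f (y i) :=
    fun y => integral_empirical y f
  simp only [key]
  exact ((continuous_const.mul (continuous_finset_sum _ fun i _ =>
    f.continuous.comp (continuous_apply i))).tendsto x)



-- ### measurability on the space of probability measures

instance instBorelPM {Y : Type*} [MeasurableSpace Y] [TopologicalSpace Y]
    [OpensMeasurableSpace Y] : BorelSpace (ProbabilityMeasure Y) := ⟨rfl⟩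

lemma integral_FNk [MeasurableSpace X] [TopologicalSpace X] [PolishSpace X] [BorelSpace X]
    {k N : ℕ} (hkN : k ≤ N) (hN : 0 < N) (lam : ProbabilityMeasure X)
    {x : Fin N → X} (hx : (lam : Measure X) = empirical N x)
    (φ : BoundedContinuousFunction (Fin k → X) ℝ) :
    ∫ y, φ y ∂(FNk (X := X) hkN lam) = psiBar hkN φ x := by
  have hex : ∃ z : Fin N → X, (lam : Measure X) = empirical N z := ⟨x, hx⟩
  unfold FNk
  rw [dif_pos hex]
  have hzspec : (lam : Measure X) = empirical N (Classical.choose hex) :=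
    Classical.choose_spec hex
  have hemp : empirical N x = empirical N (Classical.choose hex) := hx.symm.trans hzspec
  have h1 : ∫ y, φ y ∂(marginal hkN (symmetrize N (Measure.dirac (Classical.choose hex))))
      = psiBar hkN φ (Classical.choose hex) := by
    rw [integral_marginal_symmetrize hkN (Measure.dirac (Classical.choose hex)) φ,
      integral_dirac' _ _ (continuous_psiBar hkN φ).stronglyMeasurable]
  rw [h1]
  obtain ⟨σ, hσ⟩ := exists_perm_of_empirical_eq hN hemp
  rw [hσ, psiBar_comp_perm]

-- ### sorted representatives

def sorted [MeasurableSpace X] [TopologicalSpace X] [PolishSpace X] [BorelSpace X] (N : ℕ) :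
    Set (Fin N → X) :=
  {x | Monotone fun i => embeddingReal X (x i)}

lemma measurableSet_sorted [MeasurableSpace X] [TopologicalSpace X] [PolishSpace X]
    [BorelSpace X] (N : ℕ) : MeasurableSet (sorted (X := X) N) := by
  have hj : Measurable (embeddingReal X) := (measurableEmbedding_embeddingReal X).measurable
  have he : sorted (X := X) N = ⋂ (a : Fin N), ⋂ (b : Fin N), ⋂ (_ : a ≤ b),
      {x : Fin N → X | embeddingReal X (x a) ≤ embeddingReal X (x b)} := by
    ext x
    simp only [sorted, Set.mem_setOf_eq, Set.mem_iInter, Monotone]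
  rw [he]
  exact MeasurableSet.iInter fun a => MeasurableSet.iInter fun b => MeasurableSet.iInter fun _ =>
    measurableSet_le (hj.comp (measurable_pi_apply a)) (hj.comp (measurable_pi_apply b))

def sortTuple [MeasurableSpace X] [TopologicalSpace X] [PolishSpace X] [BorelSpace X] {N : ℕ}
    (x : Fin N → X) : Fin N → X :=
  x ∘ Tuple.sort (fun i => embeddingReal X (x i))

lemma sortTuple_mem [MeasurableSpace X] [TopologicalSpace X] [PolishSpace X] [BorelSpace X]
    {N : ℕ} (x : Fin N → X) : sortTuple x ∈ sorted (X := X) N :=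
  Tuple.monotone_sort (fun i => embeddingReal X (x i))

lemma empirical_sortTuple [MeasurableSpace X] [TopologicalSpace X] [PolishSpace X] [BorelSpace X]
    {N : ℕ} (x : Fin N → X) : empirical N (sortTuple x) = empirical N x :=
  empirical_comp_perm x _

lemma injOn_empPM_sorted [MeasurableSpace X] [TopologicalSpace X] [PolishSpace X] [BorelSpace X]
    {N : ℕ} (hN : 0 < N) : Set.InjOn (empPM (X := X) hN) (sorted N) := by
  intro x hx y hy hxy
  have hemp : empirical N x = empirical N y := congrArg Subtype.val hxy
  obtain ⟨σ, hσ⟩ := exists_perm_of_empirical_eq hN hemp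
  have hmx : Monotone ((fun i => embeddingReal X (y i)) ∘ ⇑σ) := by
    have he : ((fun i => embeddingReal X (y i)) ∘ ⇑σ) = fun i => embeddingReal X (x i) := by
      funext i
      rw [hσ]
      rfl
    rw [he]
    exact hx
  have hmy : Monotone ((fun i => embeddingReal X (y i)) ∘ ⇑(1 : Equiv.Perm (Fin N))) := by
    simpa using (show Monotone fun i => embeddingReal X (y i) from hy)
  have huniq := Tuple.unique_monotone hmx hmy
  funext i
  apply (measurableEmbedding_embeddingReal X).injective
  have h5 := congrFun huniq i
  simp only [Function.comp_apply, Equiv.Perm.coe_one, id_eq] at h5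
  calc embeddingReal X (x i) = embeddingReal X (y (σ i)) := by rw [hσ]; rfl
    _ = embeddingReal X (y i) := h5

lemma quantized_eq_image [MeasurableSpace X] [TopologicalSpace X] [PolishSpace X] [BorelSpace X]
    {N : ℕ} (hN : 0 < N) :
    QuantizedPM (X := X) N = empPM (X := X) hN '' sorted N := by
  ext lam
  constructor
  · rintro ⟨x, hx⟩
    refine ⟨sortTuple x, sortTuple_mem x, ?_⟩
    apply Subtype.ext
    show empirical N (sortTuple x) = (lam : Measure X)
    rw [empirical_sortTuple, hx]
  · rintro ⟨x, _, rfl⟩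
    exact ⟨x, rfl⟩

lemma measurableSet_quantized [MeasurableSpace X] [TopologicalSpace X] [PolishSpace X]
    [BorelSpace X] {N : ℕ} (hN : 0 < N) :
    MeasurableSet (QuantizedPM (X := X) N) := by
  rw [quantized_eq_image hN]
  exact (measurableSet_sorted N).image_of_continuousOn_injOn
    (continuous_empPM hN).continuousOn (injOn_empPM_sorted hN)

open Classical in
def sel [MeasurableSpace X] [TopologicalSpace X] [PolishSpace X] [BorelSpace X] [Nonempty X]
    {N : ℕ} (hN : 0 < N) (lam : ProbabilityMeasure X) : Fin N → X :=
  if h : lam ∈ empPM (X := X) hN '' sorted N then h.choose else fun _ => Classical.arbitrary X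

lemma sel_spec [MeasurableSpace X] [TopologicalSpace X] [PolishSpace X] [BorelSpace X]
    [Nonempty X] {N : ℕ} (hN : 0 < N) {lam : ProbabilityMeasure X}
    (h : lam ∈ empPM (X := X) hN '' sorted N) :
    sel hN lam ∈ sorted (X := X) N ∧ empPM hN (sel hN lam) = lam := by
  unfold sel
  rw [dif_pos h]
  exact ⟨h.choose_spec.1, h.choose_spec.2⟩

lemma measurable_sel [MeasurableSpace X] [TopologicalSpace X] [PolishSpace X] [BorelSpace X]
    [Nonempty X] {N : ℕ} (hN : 0 < N) : Measurable (sel (X := X) hN) := by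
  intro t ht
  classical
  have hQ' : MeasurableSet (empPM (X := X) hN '' sorted N) := by
    rw [← quantized_eq_image hN]; exact measurableSet_quantized hN
  have hdec : sel (X := X) hN ⁻¹' t
      = (empPM (X := X) hN '' (sorted N ∩ t)) ∪
        ((empPM (X := X) hN '' sorted N)ᶜ ∩
          (if (fun _ => Classical.arbitrary X : Fin N → X) ∈ t then Set.univ else ∅)) := by
    ext lam
    by_cases hlam : lam ∈ empPM (X := X) hN '' sorted N
    · obtain ⟨hsel1, hsel2⟩ := sel_spec hN hlam
      constructor
      · intro hmem
        exact Or.inl ⟨sel hN lam, ⟨hsel1, hmem⟩, hsel2⟩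
      · rintro (⟨y, ⟨hy1, hy2⟩, hy3⟩ | ⟨hc, _⟩)
        · have hsy : sel hN lam = y :=
            injOn_empPM_sorted hN hsel1 hy1 (by rw [hsel2, hy3])
          show sel hN lam ∈ t
          rw [hsy]
          exact hy2
        · exact absurd hlam hc
    · have hsel : sel (X := X) hN lam = fun _ => Classical.arbitrary X := by
        unfold sel
        rw [dif_neg hlam]
      constructor
      · intro hmem
        have hmem' : (fun _ => Classical.arbitrary X : Fin N → X) ∈ t := by
          rw [← hsel]
          exact hmem
        refine Or.inr ⟨hlam, ?_⟩
        rw [if_pos hmem']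
        trivial
      · rintro (⟨y, hy1, hy3⟩ | ⟨_, hright⟩)
        · exact absurd ⟨y, hy1.1, hy3⟩ hlam
        · show sel hN lam ∈ t
          rw [hsel]
          by_cases hc : (fun _ => Classical.arbitrary X : Fin N → X) ∈ t
          · exact hc
          · rw [if_neg hc] at hright
            exact absurd hright (Set.notMem_empty lam)
  rw [hdec]
  refine MeasurableSet.union ?_ (hQ'.compl.inter (by split <;> simp)) 
  exact ((measurableSet_sorted N).inter ht).image_of_continuousOn_injOn
    (continuous_empPM hN).continuousOn ((injOn_empPM_sorted hN).mono Set.inter_subset_left)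



lemma FNk_eq_psiBar_sel [MeasurableSpace X] [TopologicalSpace X] [PolishSpace X] [BorelSpace X]
    [Nonempty X] {k N : ℕ} (hkN : k ≤ N) (hN : 0 < N)
    (φ : BoundedContinuousFunction (Fin k → X) ℝ) {lam : ProbabilityMeasure X}
    (h : lam ∈ QuantizedPM (X := X) N) :
    ∫ y, φ y ∂(FNk (X := X) hkN lam) = psiBar hkN φ (sel hN lam) := by
  have h' : lam ∈ empPM (X := X) hN '' sorted N := by rwa [← quantized_eq_image hN]
  obtain ⟨hs1, hs2⟩ := sel_spec hN h'
  exact integral_FNk hkN hN lam ((congrArg Subtype.val hs2).symm) φ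

lemma measure_eq_of_integral_eq {Y : Type*} [MeasurableSpace Y] [TopologicalSpace Y]
    [PolishSpace Y] [BorelSpace Y] {μ ν : Measure Y} [IsProbabilityMeasure μ]
    [IsProbabilityMeasure ν]
    (h : ∀ φ : BoundedContinuousFunction Y ℝ, ∫ y, φ y ∂μ = ∫ y, φ y ∂ν) : μ = ν := by
  apply ext_of_forall_lintegral_eq_of_IsFiniteMeasure
  intro f
  have fR : BoundedContinuousFunction Y ℝ :=
    BoundedContinuousFunction.comp _ isometry_subtype_coe.lipschitz f
  have hcoe : ∀ y : Y, (BoundedContinuousFunction.comp _ isometry_subtype_coe.lipschitz f) y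
      = ((f y : ℝ)) := fun y => rfl
  have h1 : ∫⁻ x, (f x : ℝ≥0∞) ∂μ = ENNReal.ofReal (∫ x, ((f x : ℝ)) ∂μ) :=
    lintegral_coe_eq_integral f (by
      have := (BoundedContinuousFunction.comp _ isometry_subtype_coe.lipschitz f).integrable μ
      exact this)
  have h2 : ∫⁻ x, (f x : ℝ≥0∞) ∂ν = ENNReal.ofReal (∫ x, ((f x : ℝ)) ∂ν) :=
    lintegral_coe_eq_integral f (by
      have := (BoundedContinuousFunction.comp _ isometry_subtype_coe.lipschitz f).integrable ν
      exact this)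
  rw [h1, h2]
  congr 1
  have := h (BoundedContinuousFunction.comp _ isometry_subtype_coe.lipschitz f)
  exact this


/-- de Finetti style representation. For a Polish space `X` and
`N ≥ k ≥ 2`, a probability measure `μ_k` on `X^k` is `N`-representable iff there is a Borel
probability measure `α` on `𝒫(X)` giving full mass to `𝒫_{1/N}(X)` such that
`∫ φ dμ_k = ∫_{𝒫_{1/N}(X)} (∫ φ dF_{N,k}(λ)) dα(λ)` for every bounded continuous `φ`. -/
theorem nrep_iff_deFinetti_representation
    {X : Type*} [MeasurableSpace X] [TopologicalSpace X] [PolishSpace X] [BorelSpace X]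
    {k N : ℕ} (hk : 2 ≤ k) (hkN : k ≤ N)
    (μk : Measure (Fin k → X)) (hμk : IsProbabilityMeasure μk) :
    μk ∈ NRep (X := X) hkN ↔
      ∃ α : Measure (ProbabilityMeasure X), IsProbabilityMeasure α ∧
        α (QuantizedPM (X := X) N) = 1 ∧
        ∀ φ : BoundedContinuousFunction (Fin k → X) ℝ,
          ∫ y, φ y ∂μk = ∫ lam, (∫ y, φ y ∂(FNk (X := X) hkN lam)) ∂α := by
  have hN : 0 < N := lt_of_lt_of_le (by omega) hkN
  have hXne : Nonempty X := by
    by_contra hX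
    rw [not_nonempty_iff] at hX
    have hke : IsEmpty (Fin k → X) := ⟨fun f => hX.false (f ⟨0, by omega⟩)⟩
    have h1 := hμk.measure_univ
    rw [Set.univ_eq_empty_iff.mpr hke, measure_empty] at h1
    exact zero_ne_one h1
  constructor
  · rintro ⟨γ, ⟨hγp, hγs⟩, hμ⟩
    haveI := hγp
    have hΛm : Measurable (empPM (X := X) hN) := (continuous_empPM hN).measurable
    haveI hαp : IsProbabilityMeasure (γ.map (empPM (X := X) hN)) :=
      Measure.isProbabilityMeasure_map hΛm.aemeasurable
    have hαQ1 : (γ.map (empPM (X := X) hN)) (QuantizedPM (X := X) N) = 1 := by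
      rw [Measure.map_apply hΛm (measurableSet_quantized hN)]
      have huniv : empPM (X := X) hN ⁻¹' QuantizedPM N = Set.univ := by
        ext x
        simp only [Set.mem_preimage, Set.mem_univ, iff_true]
        exact ⟨x, rfl⟩
      rw [huniv, measure_univ]
    refine ⟨γ.map (empPM hN), hαp, hαQ1, ?_⟩
    intro φ
    have hL : ∫ y, φ y ∂μk = ∫ x, psiBar hkN φ x ∂γ := by
      rw [hμ]
      conv_lhs => rw [hγs]
      exact integral_marginal_symmetrize hkN γ φ
    have hmeas_h : Measurable fun lam => psiBar hkN φ (sel (X := X) hN lam) :=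
      (continuous_psiBar hkN φ).measurable.comp (measurable_sel hN)
    have hQc : (γ.map (empPM (X := X) hN)) (QuantizedPM (X := X) N)ᶜ = 0 := by
      rw [measure_compl (measurableSet_quantized hN) (measure_ne_top _ _), hαQ1, measure_univ]
      simp
    have hae : (fun lam => ∫ y, φ y ∂(FNk (X := X) hkN lam))
        =ᵐ[γ.map (empPM hN)] fun lam => psiBar hkN φ (sel hN lam) := by
      refine (ae_iff).mpr (measure_mono_null ?_ hQc)
      intro lam hlam hq
      exact hlam (FNk_eq_psiBar_sel hkN hN φ hq)
    calc ∫ y, φ y ∂μk = ∫ x, psiBar hkN φ x ∂γ := hL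
      _ = ∫ x, psiBar hkN φ (sel hN (empPM hN x)) ∂γ := by
          apply integral_congr_ae
          apply ae_of_all
          intro x
          have hmem : empPM (X := X) hN x ∈ empPM (X := X) hN '' sorted N :=
            ⟨sortTuple x, sortTuple_mem x, Subtype.ext (empirical_sortTuple x)⟩
          obtain ⟨hs1, hs2⟩ := sel_spec hN hmem
          have hemp : empirical N (sel hN (empPM hN x)) = empirical N x :=
            congrArg Subtype.val hs2
          obtain ⟨σ, hσ⟩ := exists_perm_of_empirical_eq hN hemp
          show psiBar hkN φ x = psiBar hkN φ (sel hN (empPM hN x))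
          rw [hσ, psiBar_comp_perm]
      _ = ∫ lam, psiBar hkN φ (sel hN lam) ∂(γ.map (empPM hN)) :=
          (integral_map hΛm.aemeasurable hmeas_h.aestronglyMeasurable).symm
      _ = ∫ lam, ∫ y, φ y ∂(FNk (X := X) hkN lam) ∂(γ.map (empPM hN)) :=
          (integral_congr_ae hae).symm
  · rintro ⟨α, hαp, hαQ, hint⟩
    haveI := hαp
    have hselm := measurable_sel (X := X) (N := N) hN
    haveI hβp : IsProbabilityMeasure (α.map (sel hN)) :=
      Measure.isProbabilityMeasure_map hselm.aemeasurable
    haveI hsymp := symmetrize_isProbabilityMeasure hβp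
    refine ⟨symmetrize N (α.map (sel hN)),
      ⟨hsymp, (symmetrize_symmetrize _).symm⟩, ?_⟩
    haveI : IsProbabilityMeasure (marginal hkN (symmetrize N (α.map (sel hN)))) := by
      unfold marginal
      exact Measure.isProbabilityMeasure_map (measurable_proj hkN).aemeasurable
    refine Eq.symm (measure_eq_of_integral_eq ?_)
    intro φ
    rw [integral_marginal_symmetrize hkN (α.map (sel hN)) φ]
    rw [integral_map hselm.aemeasurable
      ((continuous_psiBar hkN φ).measurable.aestronglyMeasurable)]
    rw [hint φ]
    apply integral_congr_ae
    have hQc : α (QuantizedPM (X := X) N)ᶜ = 0 := by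
      rw [measure_compl (measurableSet_quantized hN) (measure_ne_top _ _), hαQ, measure_univ]
      simp
    refine (ae_iff).mpr (measure_mono_null ?_ hQc)
    intro lam hlam hq
    exact hlam ((FNk_eq_psiBar_sel hkN hN φ hq).symm)

end FiniteDeFinetti
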